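/- Let (A, m) be an Artinian Gorenstein local ring with Dilworth number d(A). If a is an ideal of A with τ(a) = d(A), then μ(a :_A m) = d(A). -/

import Mathlib

universe v

lemma fin_of_artinian {K V : Type*} [Field K] [AddCommGroup V] [Module K V]
    [IsArtinian K V] : Module.Finite K V := by
  have hfin := IsArtinian.finite_of_linearIndependent
    (Module.Basis.ofVectorSpaceIndex.linearIndependent K V)
  haveI := hfin.to_subtype
  exact Module.Finite.of_basis (Module.Basis.ofVectorSpace K V)

section Aux

variable {A : Type*} [CommRing A]

open Module

set_option maxHeartbeats 1000000 in
lemma aux_finrank_le (m : Ideal A) [m.IsMaximal]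
    {M N : Type v} [AddCommGroup M] [Module A M] [AddCommGroup N] [Module A N]
    [IsArtinian A M]
    (hM : Module.IsTorsionBySet A M (m : Set A))
    (hN : Module.IsTorsionBySet A N (m : Set A))
    (f : M →ₗ[A] N) (hf : Function.Surjective f) :
    letI := hM.module; letI := hN.module
    Module.finrank (A ⧸ m) N ≤ Module.finrank (A ⧸ m) M := by
  letI := hM.module; letI := hN.module
  let g : M →ₗ[A ⧸ m] N :=
    { toFun := f, map_add' := f.map_add,
      map_smul' := by
        intro c x
        obtain ⟨r, rfl⟩ := Ideal.Quotient.mk_surjective c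
        show f (Ideal.Quotient.mk m r • x) = Ideal.Quotient.mk m r • f x
        rw [hM.mk_smul, hN.mk_smul, f.map_smul] }
  have hg : Function.Surjective g := hf
  have h1 : Module.rank (A ⧸ m) N ≤ Module.rank (A ⧸ m) M :=
    LinearMap.rank_le_of_surjective g hg
  haveI : IsScalarTower A (A ⧸ m) M := hM.isScalarTower
  haveI hart : IsArtinian (A ⧸ m) M := isArtinian_of_tower A ‹IsArtinian A M›
  haveI : Module.Finite (A ⧸ m) M :=
    @fin_of_artinian (A ⧸ m) M (Ideal.Quotient.field m) _ ‹Module (A ⧸ m) M› hart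
  have h2 : Module.rank (A ⧸ m) M < Cardinal.aleph0 := rank_lt_aleph0 _ _
  have := Cardinal.toNat_le_toNat h1 h2
  simpa [Module.finrank] using this

end Aux



open scoped Classical in
/-- `dim_{A/m} (a/b)`: the dimension over the residue field `A/m` of the subquotient `a/b`
(realized as the image of the ideal `a` in `A/b`), for ideals `b ⊆ a` with `m·a ⊆ b`; junk
value `0` if `a/b` is not killed by `m`. -/
noncomputable def resQuotDim {A : Type*} [CommRing A] (m a b : Ideal A) : ℕ :=
  if h : Module.IsTorsionBySet A
      ↥(Submodule.restrictScalars A (a.map (Ideal.Quotient.mk b))) (m : Set A) then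
    letI := h.module
    Module.finrank (A ⧸ m) ↥(Submodule.restrictScalars A (a.map (Ideal.Quotient.mk b)))
  else 0

/-- `μ(a) = dim_{A/m} a/ma`, the minimal number of generators of the ideal `a`. -/
noncomputable def muL {A : Type*} [CommRing A] (m a : Ideal A) : ℕ :=
  resQuotDim m a (m * a)

/-- `τ(a) = dim_{A/m} (a :_A m)/a`, the type of the ideal `a`. -/
noncomputable def tauL {A : Type*} [CommRing A] (m a : Ideal A) : ℕ :=
  resQuotDim m (a.colon m) a

/-- **(Ikeda–Watanabe.)**  Let `(A, m)` be an Artinian Gorenstein local ring (i.e.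
`dim_{A/m} (0 :_A m) = 1`) with Dilworth number `d(A) = max{μ(a)}`.  If `τ(a) = d(A)` then
`μ(a :_A m) = d(A)`. -/
theorem mu_colon_maximalIdeal_of_tau_eq_dilworth
    {A : Type*} [CommRing A] [IsArtinianRing A] [IsLocalRing A]
    (m : Ideal A) (hm : m = IsLocalRing.maximalIdeal A)
    (hGor : tauL m (⊥ : Ideal A) = 1)
    (d : ℕ) (hd : IsGreatest {e : ℕ | ∃ a : Ideal A, muL m a = e} d)
    (a : Ideal A) (ha : tauL m a = d) :
    muL m (a.colon m) = d := by
  have hmmax : m.IsMaximal := hm ▸ inferInstance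
  set b := a.colon m with hb
  -- m * b ≤ a
  have hmb : m * b ≤ a := by
    rw [Ideal.mul_comm]
    exact Ideal.mul_le.mpr fun s hs r hr => Submodule.mem_colon.mp hs r hr
  -- the two submodules
  set S₁ := Submodule.restrictScalars A (b.map (Ideal.Quotient.mk (m * b))) with hS₁
  set S₂ := Submodule.restrictScalars A (b.map (Ideal.Quotient.mk a)) with hS₂
  have mem1 : ∀ x : A ⧸ (m * b), x ∈ S₁ ↔ ∃ u ∈ b, Ideal.Quotient.mk (m * b) u = x := by
    intro x
    simpa [S₁] using Ideal.mem_map_iff_of_surjective _ (Ideal.Quotient.mk_surjective (I := m * b))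
      (I := b) (y := x)
  have mem2 : ∀ x : A ⧸ a, x ∈ S₂ ↔ ∃ u ∈ b, Ideal.Quotient.mk a u = x := by
    intro x
    simpa [S₂] using Ideal.mem_map_iff_of_surjective _ (Ideal.Quotient.mk_surjective (I := a))
      (I := b) (y := x)
  -- torsion
  have hT1 : Module.IsTorsionBySet A ↥S₁ (m : Set A) := by
    rintro ⟨x, hx⟩ ⟨r, hr⟩
    obtain ⟨u, hu, rfl⟩ := (mem1 x).mp hx
    ext
    show r • (Ideal.Quotient.mk (m * b) u) = 0
    rw [Algebra.smul_def, Ideal.Quotient.algebraMap_eq, ← map_mul,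
      Ideal.Quotient.eq_zero_iff_mem]
    exact Ideal.mul_mem_mul hr hu
  have hT2 : Module.IsTorsionBySet A ↥S₂ (m : Set A) := by
    rintro ⟨x, hx⟩ ⟨r, hr⟩
    obtain ⟨u, hu, rfl⟩ := (mem2 x).mp hx
    ext
    show r • (Ideal.Quotient.mk a u) = 0
    rw [Algebra.smul_def, Ideal.Quotient.algebraMap_eq, ← map_mul,
      Ideal.Quotient.eq_zero_iff_mem]
    exact hmb (Ideal.mul_mem_mul hr hu)
  -- the linear map
  let φ : (A ⧸ (m * b)) →ₗ[A] (A ⧸ a) :=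
    Submodule.mapQ (m * b) a LinearMap.id (by simpa using hmb)
  have hφ : ∀ u : A, φ (Ideal.Quotient.mk (m * b) u) = Ideal.Quotient.mk a u := fun u => rfl
  have hmaps : ∀ x ∈ S₁, φ x ∈ S₂ := by
    intro x hx
    obtain ⟨u, hu, rfl⟩ := (mem1 x).mp hx
    rw [hφ]
    exact (mem2 _).mpr ⟨u, hu, rfl⟩
  let f : ↥S₁ →ₗ[A] ↥S₂ := φ.restrict hmaps
  have hf : Function.Surjective f := by
    rintro ⟨y, hy⟩
    obtain ⟨u, hu, rfl⟩ := (mem2 y).mp hy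
    exact ⟨⟨Ideal.Quotient.mk (m * b) u, (mem1 _).mpr ⟨u, hu, rfl⟩⟩, Subtype.ext (hφ u)⟩
  haveI : IsArtinian A ↥S₁ := inferInstance
  have key : tauL m a ≤ muL m b := by
    rw [tauL, muL, resQuotDim, resQuotDim, dif_pos hT2, dif_pos hT1]
    exact aux_finrank_le m hT1 hT2 f hf
  have hle : muL m b ≤ d := hd.2 ⟨b, rfl⟩
  omega
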